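/- In a finite probability space with variables (X, M, W, A, Y), A binary, Y ≥ 0, assume: W ⟂ A | (X, M); there exists nonnegative h with E[Y | A, X, M] = E[h(W, A, X) | A, X, M] a.s.; positivity. Then the front-door functional θ_a := E[1{A=a}·Y] + ∑_{x,m,y} y·p(y | A=1−a, m, x)·p(m | A=a, x)·p(A=1−a | x)·p(x) satisfies E[1{A=a}·Y] + E[1{A=1−a}·min_w (p(w | a, X)/p(w | 1−a, X))·Y] ≤ θ_a ≤ E[1{A=a}·Y] + E[1{A=1−a}·max_w (p(w | a, X)/p(w | 1−a, X))·Y]. -/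

import Mathlib

open Finset Real
open scoped Classical

/-- Probability of an event under a pmf `P` on a finite sample space. -/
noncomputable def pr {Ω : Type*} [Fintype Ω] (P : Ω → ℝ) (E : Ω → Prop) : ℝ :=
  ∑ ω, if E ω then P ω else 0

/-- Expectation of `f` under `P`. -/
noncomputable def ex {Ω : Type*} [Fintype Ω] (P : Ω → ℝ) (f : Ω → ℝ) : ℝ :=
  ∑ ω, P ω * f ω

/-- Conditional expectation `E[f | E]`. -/
noncomputable def ce {Ω : Type*} [Fintype Ω] (P : Ω → ℝ) (f : Ω → ℝ) (E : Ω → Prop) : ℝ :=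
  (∑ ω, if E ω then P ω * f ω else 0) / pr P E

/-- Conditional probability `P(E | F)`. -/
noncomputable def cpr {Ω : Type*} [Fintype Ω] (P : Ω → ℝ) (E F : Ω → Prop) : ℝ :=
  pr P (fun ω => E ω ∧ F ω) / pr P F


section helpers
variable {Ω V : Type*} [Fintype Ω] [Fintype V]

lemma pr_congr (P : Ω → ℝ) {E F : Ω → Prop} (h : ∀ ω, E ω ↔ F ω) :
    pr P E = pr P F := by
  unfold pr; exact Finset.sum_congr rfl fun ω _ => by simp [h ω]

lemma pr_nonneg (P : Ω → ℝ) (hP : ∀ ω, 0 ≤ P ω) (E : Ω → Prop) : 0 ≤ pr P E :=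
  Finset.sum_nonneg fun ω _ => by split <;> simp [hP ω]

lemma pr_mono (P : Ω → ℝ) (hP : ∀ ω, 0 ≤ P ω) {E F : Ω → Prop}
    (h : ∀ ω, E ω → F ω) : pr P E ≤ pr P F := by
  apply Finset.sum_le_sum
  intro ω _
  by_cases hE : E ω
  · simp [hE, h ω hE]
  · simp only [hE, if_false]
    split <;> simp [hP ω]

/-- change the event (and integrand, on the event) of an indicator sum;
decidability-instance polymorphic. -/
lemma sum_ite_iff {E F : Ω → Prop} {i1 : ∀ ω, Decidable (E ω)} {i2 : ∀ ω, Decidable (F ω)}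
    {g g' : Ω → ℝ} (hEF : ∀ ω, E ω ↔ F ω) (hg : ∀ ω, E ω → g ω = g' ω) :
    (∑ ω, @ite ℝ (E ω) (i1 ω) (g ω) 0) = ∑ ω, @ite ℝ (F ω) (i2 ω) (g' ω) 0 :=
  Finset.sum_congr rfl fun ω _ => by
    by_cases hω : E ω
    · rw [if_pos hω, if_pos ((hEF ω).mp hω)]; exact hg ω hω
    · rw [if_neg hω, if_neg fun hc => hω ((hEF ω).mpr hc)]

lemma sum_ite_fiber (k : Ω → V) {E : Ω → Prop} {i : ∀ ω, Decidable (E ω)}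
    (g : Ω → ℝ) {j : ∀ v (ω : Ω), Decidable (E ω ∧ k ω = v)} :
    (∑ ω, @ite ℝ (E ω) (i ω) (g ω) 0) =
      ∑ v, ∑ ω, @ite ℝ (E ω ∧ k ω = v) (j v ω) (g ω) 0 := by
  rw [Finset.sum_comm]
  refine Finset.sum_congr rfl fun ω _ => ?_
  by_cases hE : E ω
  · rw [if_pos hE]
    have : ∀ v : V, @ite ℝ (E ω ∧ k ω = v) (j v ω) (g ω) 0 =
        (if k ω = v then g ω else 0) := by
      intro v
      by_cases hv : k ω = v
      · rw [if_pos ⟨hE, hv⟩, if_pos hv]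
      · rw [if_neg fun hc => hv hc.2, if_neg hv]
    rw [Finset.sum_congr rfl fun v _ => this v]
    simp
  · rw [if_neg hE]
    exact (Finset.sum_eq_zero fun v _ => by rw [if_neg fun hc => hE hc.1]).symm

lemma pr_fiber (P : Ω → ℝ) (k : Ω → V) (E : Ω → Prop) :
    pr P E = ∑ v, pr P (fun ω => E ω ∧ k ω = v) := by
  unfold pr
  exact sum_ite_fiber k P

lemma sum_ite_pr {E : Ω → Prop} {i : ∀ ω, Decidable (E ω)}
    (P : Ω → ℝ) (k : Ω → V) (f : V → ℝ) :
    (∑ ω, @ite ℝ (E ω) (i ω) (P ω * f (k ω)) 0) =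
      ∑ v, f v * pr P (fun ω => k ω = v ∧ E ω) := by
  unfold pr
  simp only [Finset.mul_sum, mul_ite, mul_zero]
  rw [Finset.sum_comm]
  refine Finset.sum_congr rfl fun ω _ => ?_
  by_cases hE : E ω
  · rw [if_pos hE]
    have : ∀ v : V, (if k ω = v ∧ E ω then f v * P ω else 0) =
        (if k ω = v then f (k ω) * P ω else 0) := by
      intro v
      by_cases hv : k ω = v
      · rw [if_pos ⟨hv, hE⟩, if_pos hv, hv]
      · rw [if_neg fun hc => hv hc.1, if_neg hv]
    rw [Finset.sum_congr rfl fun v _ => this v]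
    simp [mul_comm]
  · rw [if_neg hE]
    exact (Finset.sum_eq_zero fun v _ => by rw [if_neg fun hc => hE hc.2]).symm

end helpers

/-- Theorem 5: front-door model with a hidden mediator — bounds on
`θ_a = E[1{A=a}Y] + ∑_{x,m,y} y·p(y | 1−a, m, x)·p(m | a, x)·p(1−a | x)·p(x)`. -/
theorem front_door_bounds {Ω X M W : Type*} [Fintype Ω] [Fintype X] [Fintype M]
    [Fintype W] [Nonempty W]
    (P : Ω → ℝ) (hP : ∀ ω, 0 ≤ P ω) (hP1 : ∑ ω, P ω = 1)
    (Xv : Ω → X) (Mv : Ω → M) (Wv : Ω → W) (Av : Ω → Bool) (Yv : Ω → ℝ) (a : Bool)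
    (hY : ∀ ω, 0 ≤ Yv ω)
    -- W ⟂ A | (X, M)
    (hWA : ∀ (w : W) (a' : Bool) (x : X) (m : M),
      pr P (fun ω => Wv ω = w ∧ Av ω = a' ∧ Xv ω = x ∧ Mv ω = m) *
          pr P (fun ω => Xv ω = x ∧ Mv ω = m) =
        pr P (fun ω => Wv ω = w ∧ Xv ω = x ∧ Mv ω = m) *
          pr P (fun ω => Av ω = a' ∧ Xv ω = x ∧ Mv ω = m))
    -- front-door bridge function h
    (h : W → Bool → X → ℝ) (hh : ∀ w a' x, 0 ≤ h w a' x)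
    (hbridge : ∀ (a' : Bool) (x : X) (m : M),
      ce P Yv (fun ω => Av ω = a' ∧ Xv ω = x ∧ Mv ω = m) =
        ce P (fun ω => h (Wv ω) a' (Xv ω)) (fun ω => Av ω = a' ∧ Xv ω = x ∧ Mv ω = m))
    -- positivity
    (hpos : ∀ (a' : Bool) (x : X) (m : M),
      0 < pr P fun ω => Av ω = a' ∧ Xv ω = x ∧ Mv ω = m)
    (hposW : ∀ (w : W) (a' : Bool) (x : X),
      0 < pr P fun ω => Wv ω = w ∧ Av ω = a' ∧ Xv ω = x) :
    ((∑ ω, if Av ω = a then P ω * Yv ω else 0) +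
        ∑ ω, if Av ω = !a then
          P ω * ((univ.inf' univ_nonempty fun w : W =>
              cpr P (fun ω' => Wv ω' = w) (fun ω' => Av ω' = a ∧ Xv ω' = Xv ω) /
                cpr P (fun ω' => Wv ω' = w) (fun ω' => Av ω' = !a ∧ Xv ω' = Xv ω)) * Yv ω)
          else 0) ≤
      ((∑ ω, if Av ω = a then P ω * Yv ω else 0) +
        ∑ x : X, ∑ m : M,
          ce P Yv (fun ω => Av ω = !a ∧ Mv ω = m ∧ Xv ω = x) *
            cpr P (fun ω => Mv ω = m) (fun ω => Av ω = a ∧ Xv ω = x) *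
            cpr P (fun ω => Av ω = !a) (fun ω => Xv ω = x) * pr P (fun ω => Xv ω = x)) ∧
    ((∑ ω, if Av ω = a then P ω * Yv ω else 0) +
        ∑ x : X, ∑ m : M,
          ce P Yv (fun ω => Av ω = !a ∧ Mv ω = m ∧ Xv ω = x) *
            cpr P (fun ω => Mv ω = m) (fun ω => Av ω = a ∧ Xv ω = x) *
            cpr P (fun ω => Av ω = !a) (fun ω => Xv ω = x) * pr P (fun ω => Xv ω = x)) ≤
      (∑ ω, if Av ω = a then P ω * Yv ω else 0) +
        ∑ ω, if Av ω = !a then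
          P ω * ((univ.sup' univ_nonempty fun w : W =>
              cpr P (fun ω' => Wv ω' = w) (fun ω' => Av ω' = a ∧ Xv ω' = Xv ω) /
                cpr P (fun ω' => Wv ω' = w) (fun ω' => Av ω' = !a ∧ Xv ω' = Xv ω)) * Yv ω)
          else 0 := by
  classical
  have hqax_pos : ∀ (a' : Bool) (x : X), 0 < pr P (fun ω => Av ω = a' ∧ Xv ω = x) := by
    intro a' x
    exact lt_of_lt_of_le (hposW (Classical.arbitrary W) a' x)
      (pr_mono P hP fun ω hω => hω.2)
  have hqx_pos : ∀ x : X, 0 < pr P (fun ω => Xv ω = x) := by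
    intro x
    exact lt_of_lt_of_le (hqax_pos a x) (pr_mono P hP fun ω hω => hω.2)
  have hqxm_pos : ∀ (x : X) (m : M), 0 < pr P (fun ω => Xv ω = x ∧ Mv ω = m) := by
    intro x m
    exact lt_of_lt_of_le (hpos a x m) (pr_mono P hP fun ω hω => ⟨hω.2.1, hω.2.2⟩)
  -- bridge numerator identity
  have hMnum : ∀ (a' : Bool) (x : X) (m : M),
      (∑ ω, @ite ℝ (Av ω = a' ∧ Xv ω = x ∧ Mv ω = m) (Classical.propDecidable _)
          (P ω * Yv ω) 0) =
        ∑ w, h w a' x * pr P (fun ω => Wv ω = w ∧ Av ω = a' ∧ Xv ω = x ∧ Mv ω = m) := by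
    intro a' x m
    have hb := hbridge a' x m
    unfold ce at hb
    have hd : pr P (fun ω => Av ω = a' ∧ Xv ω = x ∧ Mv ω = m) ≠ 0 := (hpos a' x m).ne'
    rw [div_eq_div_iff hd hd] at hb
    have hnum := mul_right_cancel₀ hd hb
    rw [hnum]
    refine Eq.trans (sum_ite_iff (i2 := fun ω => Classical.propDecidable _)
      (g' := fun ω => P ω * (fun w => h w a' x) (Wv ω))
      (fun ω => Iff.rfl) (fun ω hc => ?_)) (sum_ite_pr P Wv (fun w => h w a' x))
    simp only
    rw [hc.2.1]
  -- cross relation from conditional independence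
  have hcross : ∀ (w : W) (x : X) (m : M),
      pr P (fun ω => Wv ω = w ∧ Av ω = !a ∧ Xv ω = x ∧ Mv ω = m) *
        pr P (fun ω => Av ω = a ∧ Xv ω = x ∧ Mv ω = m) =
      pr P (fun ω => Wv ω = w ∧ Av ω = a ∧ Xv ω = x ∧ Mv ω = m) *
        pr P (fun ω => Av ω = !a ∧ Xv ω = x ∧ Mv ω = m) := by
    intro w x m
    have h1 := hWA w a x m
    have h2 := hWA w (!a) x m
    apply mul_right_cancel₀ (hqxm_pos x m).ne'
    linear_combination pr P (fun ω => Av ω = a ∧ Xv ω = x ∧ Mv ω = m) * h2 -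
      pr P (fun ω => Av ω = !a ∧ Xv ω = x ∧ Mv ω = m) * h1
  -- marginalization over M
  have hmarg : ∀ (w : W) (a' : Bool) (x : X),
      (∑ m, pr P (fun ω => Wv ω = w ∧ Av ω = a' ∧ Xv ω = x ∧ Mv ω = m)) =
        pr P (fun ω => Wv ω = w ∧ Av ω = a' ∧ Xv ω = x) := by
    intro w a' x
    rw [pr_fiber P Mv (fun ω => Wv ω = w ∧ Av ω = a' ∧ Xv ω = x)]
    exact Finset.sum_congr rfl fun m _ => pr_congr P fun ω => by tauto
  -- numerator of E[1{A=!a, X=x} Y]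
  have hTnum : ∀ x : X,
      (∑ ω, @ite ℝ (Av ω = !a ∧ Xv ω = x) (Classical.propDecidable _) (P ω * Yv ω) 0) =
        ∑ w, h w (!a) x * pr P (fun ω => Wv ω = w ∧ Av ω = !a ∧ Xv ω = x) := by
    intro x
    have inner : ∀ m : M,
        (∑ ω, @ite ℝ ((Av ω = !a ∧ Xv ω = x) ∧ Mv ω = m) (Classical.propDecidable _)
            (P ω * Yv ω) 0)
          = ∑ w, h w (!a) x *
            pr P (fun ω => Wv ω = w ∧ Av ω = !a ∧ Xv ω = x ∧ Mv ω = m) := fun m =>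
      Eq.trans (sum_ite_iff (i2 := fun ω => Classical.propDecidable _)
        (fun ω => by tauto) (fun ω _ => rfl)) (hMnum (!a) x m)
    rw [sum_ite_fiber (E := fun ω => Av ω = !a ∧ Xv ω = x)
      (i := fun ω => Classical.propDecidable _)
      (j := fun m ω => Classical.propDecidable _) Mv (fun ω => P ω * Yv ω)]
    rw [Finset.sum_congr rfl fun m _ => inner m, Finset.sum_comm]
    refine Finset.sum_congr rfl fun w _ => ?_
    rw [← Finset.mul_sum, hmarg]
  -- the middle term, per (x, m)
  have hmid : ∀ (x : X) (m : M),
      ce P Yv (fun ω => Av ω = !a ∧ Mv ω = m ∧ Xv ω = x) *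
        cpr P (fun ω => Mv ω = m) (fun ω => Av ω = a ∧ Xv ω = x) *
        cpr P (fun ω => Av ω = !a) (fun ω => Xv ω = x) * pr P (fun ω => Xv ω = x) =
      (∑ w, h w (!a) x * pr P (fun ω => Wv ω = w ∧ Av ω = a ∧ Xv ω = x ∧ Mv ω = m)) *
        (pr P (fun ω => Av ω = !a ∧ Xv ω = x) / pr P (fun ω => Av ω = a ∧ Xv ω = x)) := by
    intro x m
    unfold ce cpr
    rw [pr_congr P (show ∀ ω, (Av ω = !a ∧ Mv ω = m ∧ Xv ω = x) ↔
        (Av ω = !a ∧ Xv ω = x ∧ Mv ω = m) from fun ω => by tauto)]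
    rw [pr_congr P (show ∀ ω, (Mv ω = m ∧ Av ω = a ∧ Xv ω = x) ↔
        (Av ω = a ∧ Xv ω = x ∧ Mv ω = m) from fun ω => by tauto)]
    have numeq : (∑ ω, @ite ℝ (Av ω = !a ∧ Mv ω = m ∧ Xv ω = x) (Classical.propDecidable _)
          (P ω * Yv ω) 0)
        = ∑ w, h w (!a) x *
            pr P (fun ω => Wv ω = w ∧ Av ω = !a ∧ Xv ω = x ∧ Mv ω = m) :=
      Eq.trans (sum_ite_iff (i2 := fun ω => Classical.propDecidable _)
        (fun ω => by tauto) (fun ω _ => rfl)) (hMnum (!a) x m)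
    rw [numeq]
    have key : (∑ w, h w (!a) x *
          pr P (fun ω => Wv ω = w ∧ Av ω = !a ∧ Xv ω = x ∧ Mv ω = m)) *
          pr P (fun ω => Av ω = a ∧ Xv ω = x ∧ Mv ω = m) =
        (∑ w, h w (!a) x *
          pr P (fun ω => Wv ω = w ∧ Av ω = a ∧ Xv ω = x ∧ Mv ω = m)) *
          pr P (fun ω => Av ω = !a ∧ Xv ω = x ∧ Mv ω = m) := by
      rw [Finset.sum_mul, Finset.sum_mul]
      exact Finset.sum_congr rfl fun w _ => by
        linear_combination h w (!a) x * hcross w x m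
    have h1 : pr P (fun ω => Av ω = !a ∧ Xv ω = x ∧ Mv ω = m) ≠ 0 := (hpos (!a) x m).ne'
    have h2 : pr P (fun ω => Av ω = a ∧ Xv ω = x) ≠ 0 := (hqax_pos a x).ne'
    have h3 : pr P (fun ω => Xv ω = x) ≠ 0 := (hqx_pos x).ne'
    field_simp [h1, h2, h3]
    linear_combination pr P (fun ω => Av ω = !a ∧ Xv ω = x) * key
  -- summing the middle term
  have hmidsum : (∑ x : X, ∑ m : M,
      ce P Yv (fun ω => Av ω = !a ∧ Mv ω = m ∧ Xv ω = x) *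
        cpr P (fun ω => Mv ω = m) (fun ω => Av ω = a ∧ Xv ω = x) *
        cpr P (fun ω => Av ω = !a) (fun ω => Xv ω = x) * pr P (fun ω => Xv ω = x)) =
      ∑ x : X, (∑ w, h w (!a) x * pr P (fun ω => Wv ω = w ∧ Av ω = a ∧ Xv ω = x)) *
        (pr P (fun ω => Av ω = !a ∧ Xv ω = x) / pr P (fun ω => Av ω = a ∧ Xv ω = x)) := by
    refine Finset.sum_congr rfl fun x _ => ?_
    rw [Finset.sum_congr rfl fun m _ => hmid x m, ← Finset.sum_mul, Finset.sum_comm]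
    congr 1
    refine Finset.sum_congr rfl fun w _ => ?_
    rw [← Finset.mul_sum, hmarg]
  -- the bound terms
  have hlow : (∑ ω, if Av ω = !a then
        P ω * ((univ.inf' univ_nonempty fun w : W =>
            cpr P (fun ω' => Wv ω' = w) (fun ω' => Av ω' = a ∧ Xv ω' = Xv ω) /
              cpr P (fun ω' => Wv ω' = w) (fun ω' => Av ω' = !a ∧ Xv ω' = Xv ω)) * Yv ω)
        else 0) =
      ∑ x : X, (univ.inf' univ_nonempty fun w : W =>
            cpr P (fun ω' => Wv ω' = w) (fun ω' => Av ω' = a ∧ Xv ω' = x) /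
              cpr P (fun ω' => Wv ω' = w) (fun ω' => Av ω' = !a ∧ Xv ω' = x)) *
        (∑ w, h w (!a) x * pr P (fun ω => Wv ω = w ∧ Av ω = !a ∧ Xv ω = x)) := by
    rw [sum_ite_fiber (j := fun x ω => Classical.propDecidable _) Xv _]
    refine Finset.sum_congr rfl fun x _ => ?_
    rw [← hTnum x, Finset.mul_sum]
    refine Finset.sum_congr rfl fun ω _ => ?_
    by_cases hc : Av ω = !a ∧ Xv ω = x
    · rw [if_pos hc, if_pos hc, hc.2]
      ring
    · rw [if_neg hc, if_neg hc, mul_zero]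
  have hup : (∑ ω, if Av ω = !a then
        P ω * ((univ.sup' univ_nonempty fun w : W =>
            cpr P (fun ω' => Wv ω' = w) (fun ω' => Av ω' = a ∧ Xv ω' = Xv ω) /
              cpr P (fun ω' => Wv ω' = w) (fun ω' => Av ω' = !a ∧ Xv ω' = Xv ω)) * Yv ω)
        else 0) =
      ∑ x : X, (univ.sup' univ_nonempty fun w : W =>
            cpr P (fun ω' => Wv ω' = w) (fun ω' => Av ω' = a ∧ Xv ω' = x) /
              cpr P (fun ω' => Wv ω' = w) (fun ω' => Av ω' = !a ∧ Xv ω' = x)) *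
        (∑ w, h w (!a) x * pr P (fun ω => Wv ω = w ∧ Av ω = !a ∧ Xv ω = x)) := by
    rw [sum_ite_fiber (j := fun x ω => Classical.propDecidable _) Xv _]
    refine Finset.sum_congr rfl fun x _ => ?_
    rw [← hTnum x, Finset.mul_sum]
    refine Finset.sum_congr rfl fun ω _ => ?_
    by_cases hc : Av ω = !a ∧ Xv ω = x
    · rw [if_pos hc, if_pos hc, hc.2]
      ring
    · rw [if_neg hc, if_neg hc, mul_zero]
  -- the key per-(x,w) identity for the ratio
  have hratio : ∀ (x : X) (w : W),
      (cpr P (fun ω' => Wv ω' = w) (fun ω' => Av ω' = a ∧ Xv ω' = x) /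
        cpr P (fun ω' => Wv ω' = w) (fun ω' => Av ω' = !a ∧ Xv ω' = x)) *
        pr P (fun ω => Wv ω = w ∧ Av ω = !a ∧ Xv ω = x) =
      pr P (fun ω => Wv ω = w ∧ Av ω = a ∧ Xv ω = x) *
        (pr P (fun ω => Av ω = !a ∧ Xv ω = x) / pr P (fun ω => Av ω = a ∧ Xv ω = x)) := by
    intro x w
    have e1 : cpr P (fun ω' => Wv ω' = w) (fun ω' => Av ω' = a ∧ Xv ω' = x) =
        pr P (fun ω => Wv ω = w ∧ Av ω = a ∧ Xv ω = x) /
          pr P (fun ω => Av ω = a ∧ Xv ω = x) := rfl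
    have e2 : cpr P (fun ω' => Wv ω' = w) (fun ω' => Av ω' = !a ∧ Xv ω' = x) =
        pr P (fun ω => Wv ω = w ∧ Av ω = !a ∧ Xv ω = x) /
          pr P (fun ω => Av ω = !a ∧ Xv ω = x) := rfl
    rw [e1, e2]
    have n1 : pr P (fun ω => Wv ω = w ∧ Av ω = !a ∧ Xv ω = x) ≠ 0 := (hposW w (!a) x).ne'
    have n2 : pr P (fun ω => Av ω = a ∧ Xv ω = x) ≠ 0 := (hqax_pos a x).ne'
    have n3 : pr P (fun ω => Av ω = !a ∧ Xv ω = x) ≠ 0 := (hqax_pos (!a) x).ne'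
    field_simp
  constructor
  · rw [hmidsum, hlow]
    apply add_le_add_right
    apply Finset.sum_le_sum
    intro x _
    rw [Finset.mul_sum, Finset.sum_mul]
    apply Finset.sum_le_sum
    intro w _
    have hle : (univ.inf' univ_nonempty fun w : W =>
          cpr P (fun ω' => Wv ω' = w) (fun ω' => Av ω' = a ∧ Xv ω' = x) /
            cpr P (fun ω' => Wv ω' = w) (fun ω' => Av ω' = !a ∧ Xv ω' = x)) ≤
        cpr P (fun ω' => Wv ω' = w) (fun ω' => Av ω' = a ∧ Xv ω' = x) /
          cpr P (fun ω' => Wv ω' = w) (fun ω' => Av ω' = !a ∧ Xv ω' = x) :=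
      Finset.inf'_le _ (Finset.mem_univ w)
    have hstep := mul_le_mul_of_nonneg_right hle (pr_nonneg P hP
      (fun ω => Wv ω = w ∧ Av ω = !a ∧ Xv ω = x))
    rw [hratio x w] at hstep
    calc (univ.inf' univ_nonempty fun w : W =>
            cpr P (fun ω' => Wv ω' = w) (fun ω' => Av ω' = a ∧ Xv ω' = x) /
              cpr P (fun ω' => Wv ω' = w) (fun ω' => Av ω' = !a ∧ Xv ω' = x)) *
          (h w (!a) x * pr P (fun ω => Wv ω = w ∧ Av ω = !a ∧ Xv ω = x))
        = h w (!a) x * ((univ.inf' univ_nonempty fun w : W =>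
            cpr P (fun ω' => Wv ω' = w) (fun ω' => Av ω' = a ∧ Xv ω' = x) /
              cpr P (fun ω' => Wv ω' = w) (fun ω' => Av ω' = !a ∧ Xv ω' = x)) *
          pr P (fun ω => Wv ω = w ∧ Av ω = !a ∧ Xv ω = x)) := by ring
      _ ≤ h w (!a) x * (pr P (fun ω => Wv ω = w ∧ Av ω = a ∧ Xv ω = x) *
          (pr P (fun ω => Av ω = !a ∧ Xv ω = x) /
            pr P (fun ω => Av ω = a ∧ Xv ω = x))) :=
        mul_le_mul_of_nonneg_left hstep (hh w (!a) x)
      _ = h w (!a) x * pr P (fun ω => Wv ω = w ∧ Av ω = a ∧ Xv ω = x) *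
          (pr P (fun ω => Av ω = !a ∧ Xv ω = x) /
            pr P (fun ω => Av ω = a ∧ Xv ω = x)) := by ring
  · rw [hmidsum, hup]
    apply add_le_add_right
    apply Finset.sum_le_sum
    intro x _
    rw [Finset.mul_sum, Finset.sum_mul]
    apply Finset.sum_le_sum
    intro w _
    have hle : cpr P (fun ω' => Wv ω' = w) (fun ω' => Av ω' = a ∧ Xv ω' = x) /
          cpr P (fun ω' => Wv ω' = w) (fun ω' => Av ω' = !a ∧ Xv ω' = x) ≤
        (univ.sup' univ_nonempty fun w : W =>
          cpr P (fun ω' => Wv ω' = w) (fun ω' => Av ω' = a ∧ Xv ω' = x) /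
            cpr P (fun ω' => Wv ω' = w) (fun ω' => Av ω' = !a ∧ Xv ω' = x)) :=
      Finset.le_sup' (f := fun w : W =>
        cpr P (fun ω' => Wv ω' = w) (fun ω' => Av ω' = a ∧ Xv ω' = x) /
          cpr P (fun ω' => Wv ω' = w) (fun ω' => Av ω' = !a ∧ Xv ω' = x))
        (Finset.mem_univ w)
    have hstep := mul_le_mul_of_nonneg_right hle (pr_nonneg P hP
      (fun ω => Wv ω = w ∧ Av ω = !a ∧ Xv ω = x))
    rw [hratio x w] at hstep
    calc h w (!a) x * pr P (fun ω => Wv ω = w ∧ Av ω = a ∧ Xv ω = x) *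
          (pr P (fun ω => Av ω = !a ∧ Xv ω = x) /
            pr P (fun ω => Av ω = a ∧ Xv ω = x))
        = h w (!a) x * (pr P (fun ω => Wv ω = w ∧ Av ω = a ∧ Xv ω = x) *
          (pr P (fun ω => Av ω = !a ∧ Xv ω = x) /
            pr P (fun ω => Av ω = a ∧ Xv ω = x))) := by ring
      _ ≤ h w (!a) x * ((univ.sup' univ_nonempty fun w : W =>
            cpr P (fun ω' => Wv ω' = w) (fun ω' => Av ω' = a ∧ Xv ω' = x) /
              cpr P (fun ω' => Wv ω' = w) (fun ω' => Av ω' = !a ∧ Xv ω' = x)) *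
          pr P (fun ω => Wv ω = w ∧ Av ω = !a ∧ Xv ω = x)) :=
        mul_le_mul_of_nonneg_left hstep (hh w (!a) x)
      _ = (univ.sup' univ_nonempty fun w : W =>
            cpr P (fun ω' => Wv ω' = w) (fun ω' => Av ω' = a ∧ Xv ω' = x) /
              cpr P (fun ω' => Wv ω' = w) (fun ω' => Av ω' = !a ∧ Xv ω' = x)) *
          (h w (!a) x * pr P (fun ω => Wv ω = w ∧ Av ω = !a ∧ Xv ω = x)) := by ring
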